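/- Let f : ℝⁿ → ℝ be C² and satisfy the PL inequality f(x) - f* ≤ (1/(2μ))‖∇f(x)‖² in a neighborhood of a local minimum x̄ with value f*. If λ is a nonzero eigenvalue of ∇²f(x̄), then λ ≥ μ. -/

import Mathlib

open Metric Filter Topology

set_option maxHeartbeats 1000000 in
/-- Under the PL inequality, every nonzero eigenvalue of the Hessian at the minimizer
is at least `μ`. -/
theorem pl_eigenvalue_lower_bound {n : ℕ}
    (f : EuclideanSpace ℝ (Fin n) → ℝ) (xb : EuclideanSpace ℝ (Fin n))
    (hf : ContDiff ℝ 2 f) (hmin : IsLocalMin f xb)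
    (μ : ℝ) (hμ : 0 < μ)
    (hPL : ∀ᶠ x in 𝓝 xb, f x - f xb ≤ (1 / (2 * μ)) * ‖gradient f x‖ ^ 2)
    (lam : ℝ) (hlam : lam ≠ 0)
    (v : EuclideanSpace ℝ (Fin n)) (hv : v ≠ 0)
    (heig : fderiv ℝ (gradient f) xb v = lam • v) :
    μ ≤ lam := by
  have hv2 : (0:ℝ) < ‖v‖ ^ 2 := by
    have := norm_pos_iff.mpr hv
    positivity
  have hfd : Differentiable ℝ f := hf.differentiable (by norm_num)
  have hgrad0 : gradient f xb = 0 := by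
    rw [gradient, hmin.fderiv_eq_zero, map_zero]
  have hgdiff : DifferentiableAt ℝ (gradient f) xb := by
    have h1 : ContDiff ℝ 1 (fderiv ℝ f) := hf.fderiv_right (by norm_num)
    have h2 : Differentiable ℝ (fderiv ℝ f) := h1.differentiable (by norm_num)
    exact ((InnerProductSpace.toDual ℝ
      (EuclideanSpace ℝ (Fin n))).symm.toContinuousLinearEquiv.differentiable.comp h2) xb
  set c : ℝ → EuclideanSpace ℝ (Fin n) := fun t => xb + t • v with hcdef
  have hcderiv : ∀ t : ℝ, HasDerivAt c v t := by
    intro t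
    simpa [hcdef] using ((hasDerivAt_id t).smul_const v).const_add xb
  have hc0 : c 0 = xb := by simp [hcdef]
  have hccont : Continuous c := by fun_prop
  set h : ℝ → EuclideanSpace ℝ (Fin n) := fun t => gradient f (c t) with hhdef
  have hh0 : h 0 = 0 := by rw [hhdef]; simp only [hc0]; exact hgrad0
  have hhderiv : HasDerivAt h (lam • v) 0 := by
    have h1 : HasFDerivAt (gradient f) (fderiv ℝ (gradient f) xb) (c 0) :=
      hc0 ▸ hgdiff.hasFDerivAt
    have h2 := h1.comp_hasDerivAt 0 (hcderiv 0)
    rw [heig] at h2; exact h2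
  set g : ℝ → ℝ := fun t => f (c t) with hgdef
  have hg0 : g 0 = f xb := by rw [hgdef]; simp only [hc0]
  have hgderiv : ∀ t : ℝ, HasDerivAt g (inner ℝ (h t) v : ℝ) t := by
    intro t
    have h1 : HasFDerivAt f (fderiv ℝ f (c t)) (c t) := (hfd (c t)).hasFDerivAt
    have h2 := h1.comp_hasDerivAt t (hcderiv t)
    have h3 : fderiv ℝ f (c t) v = (inner ℝ (gradient f (c t)) v : ℝ) := by
      conv_lhs => rw [← (InnerProductSpace.toDual ℝ
        (EuclideanSpace ℝ (Fin n))).apply_symm_apply (fderiv ℝ f (c t))]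
      rw [InnerProductSpace.toDual_apply_apply, gradient]
    rw [h3] at h2; exact h2
  have hg'0 : (inner ℝ (h 0) v : ℝ) = 0 := by simp [hh0]
  have hg'deriv : HasDerivAt (fun t => (inner ℝ (h t) v : ℝ)) (lam * ‖v‖ ^ 2) 0 := by
    have h1 := (innerSL ℝ v).hasFDerivAt.comp_hasDerivAt 0 hhderiv
    have h2 : ((innerSL ℝ) v) (lam • v) = lam * ‖v‖ ^ 2 := by
      rw [innerSL_apply_apply, real_inner_smul_right, real_inner_self_eq_norm_sq]
    rw [h2] at h1
    refine h1.congr_of_eventuallyEq (Eventually.of_forall fun t => ?_)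
    rw [Function.comp_apply, innerSL_apply_apply, real_inner_comm]
  -- slope limit for g'
  have hslope1 : Tendsto (fun t => (inner ℝ (h t) v : ℝ) / t) (𝓝[>] (0:ℝ))
      (𝓝 (lam * ‖v‖ ^ 2)) := by
    have h1 := hasDerivAt_iff_tendsto_slope.mp hg'deriv
    have h2 : Tendsto (fun t => (inner ℝ (h t) v : ℝ) / t) (𝓝[≠] (0:ℝ))
        (𝓝 (lam * ‖v‖ ^ 2)) := by
      refine h1.congr fun t => ?_
      rw [slope_def_field, hg'0, sub_zero, sub_zero]
    exact h2.mono_left (nhdsWithin_mono 0 fun x hx => ne_of_gt hx)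
  -- main limit via L'Hôpital
  have hmain : Tendsto (fun t => (g t - g 0) / t ^ 2) (𝓝[>] (0:ℝ))
      (𝓝 (lam * ‖v‖ ^ 2 / 2)) := by
    apply HasDerivAt.lhopital_zero_nhdsGT
      (f' := fun t => (inner ℝ (h t) v : ℝ)) (g' := fun t => 2 * t)
    · exact Eventually.of_forall fun t => (hgderiv t).sub_const (g 0)
    · exact Eventually.of_forall fun t => by simpa [mul_comm] using hasDerivAt_pow 2 t
    · filter_upwards [self_mem_nhdsWithin] with t ht
      have : (0:ℝ) < t := ht
      positivity
    · have h1 : Tendsto (fun t => g t - g 0) (𝓝 (0:ℝ)) (𝓝 (g 0 - g 0)) :=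
        ((hfd.continuous.comp hccont).tendsto 0).sub_const (g 0)
      simpa using h1.mono_left nhdsWithin_le_nhds
    · have h1 : Tendsto (fun t : ℝ => t ^ 2) (𝓝 (0:ℝ)) (𝓝 ((0:ℝ) ^ 2)) :=
        (continuous_pow 2).tendsto 0
      simpa using h1.mono_left nhdsWithin_le_nhds
    · have h1 := hslope1.div_const 2
      refine h1.congr fun t => ?_
      rw [div_div, mul_comm]
  -- second limit
  have hslope2 : Tendsto (fun t => ‖h t‖ ^ 2 / t ^ 2) (𝓝[>] (0:ℝ))
      (𝓝 (lam ^ 2 * ‖v‖ ^ 2)) := by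
    have h1 := hasDerivAt_iff_tendsto_slope.mp hhderiv
    have h2 : Tendsto (fun t => ‖slope h 0 t‖ ^ 2) (𝓝[≠] (0:ℝ)) (𝓝 (‖lam • v‖ ^ 2)) :=
      h1.norm.pow 2
    have h3 : ‖lam • v‖ ^ 2 = lam ^ 2 * ‖v‖ ^ 2 := by
      rw [norm_smul]; rw [mul_pow]; simp [sq_abs]
    rw [h3] at h2
    have h4 : Tendsto (fun t => ‖h t‖ ^ 2 / t ^ 2) (𝓝[≠] (0:ℝ))
        (𝓝 (lam ^ 2 * ‖v‖ ^ 2)) := by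
      refine h2.congr' ?_
      filter_upwards [self_mem_nhdsWithin] with t ht
      have ht' : t ≠ 0 := ht
      rw [slope_def_module]
      rw [hh0, sub_zero, sub_zero, norm_smul]
      rw [mul_pow]
      rw [norm_inv, Real.norm_eq_abs, ← sq_abs t]
      field_simp
    exact h4.mono_left (nhdsWithin_mono 0 fun x hx => ne_of_gt hx)
  -- eventual PL inequality
  have hctend : Tendsto c (𝓝 0) (𝓝 xb) := by
    rw [← hc0]; exact hccont.continuousAt
  have hPLt : ∀ᶠ t in 𝓝[>] (0:ℝ),
      (g t - g 0) / t ^ 2 ≤ (1 / (2 * μ)) * (‖h t‖ ^ 2 / t ^ 2) := by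
    have h2 : ∀ᶠ t in 𝓝[>] (0:ℝ), f (c t) - f xb ≤ 1 / (2 * μ) * ‖gradient f (c t)‖ ^ 2 :=
      (hctend.eventually hPL).filter_mono nhdsWithin_le_nhds
    filter_upwards [h2, self_mem_nhdsWithin] with t hPLt ht
    have ht2 : (0:ℝ) < t ^ 2 := by
      have : (0:ℝ) < t := ht
      positivity
    have h3 : g t - g 0 ≤ (1 / (2 * μ)) * ‖h t‖ ^ 2 := by
      rw [hg0]; exact hPLt
    rw [← mul_div_assoc]
    exact div_le_div_of_nonneg_right h3 ht2.le
  have hq : Tendsto (fun t => (1 / (2 * μ)) * (‖h t‖ ^ 2 / t ^ 2)) (𝓝[>] (0:ℝ))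
      (𝓝 ((1 / (2 * μ)) * (lam ^ 2 * ‖v‖ ^ 2))) := hslope2.const_mul _
  have hle : lam * ‖v‖ ^ 2 / 2 ≤ (1 / (2 * μ)) * (lam ^ 2 * ‖v‖ ^ 2) :=
    le_of_tendsto_of_tendsto hmain hq hPLt
  -- nonnegativity of lam
  have hev : ∀ᶠ t in 𝓝[>] (0:ℝ), 0 ≤ (g t - g 0) / t ^ 2 := by
    have h2 : ∀ᶠ t in 𝓝[>] (0:ℝ), f xb ≤ f (c t) :=
      (hctend.eventually hmin).filter_mono nhdsWithin_le_nhds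
    filter_upwards [h2] with t hmt
    have : g 0 ≤ g t := by rw [hg0]; exact hmt
    have ht2 : (0:ℝ) ≤ t ^ 2 := sq_nonneg t
    exact div_nonneg (by linarith) ht2
  have hlamnn : 0 ≤ lam * ‖v‖ ^ 2 / 2 := ge_of_tendsto hmain hev
  have hlampos : 0 < lam := by
    rcases hlam.lt_or_gt with hneg | hpos
    · nlinarith [mul_pos (neg_pos.mpr hneg) hv2]
    · exact hpos
  have h2 : μ * (lam * ‖v‖ ^ 2) ≤ lam ^ 2 * ‖v‖ ^ 2 := by
    have hμ' : (2 * μ) ≠ 0 := by positivity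
    rw [div_mul_eq_mul_div, one_mul, div_le_div_iff₀ (by norm_num) (by positivity)] at hle
    nlinarith
  nlinarith [mul_pos hlampos hv2]
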